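/- Let H₀ and H₁ be complex Hilbert spaces, T₀ ∈ B(H₀), T₁ ∈ B(H₁), A ∈ B(H₁, H₀), and let R be the block operator on H₀ ⊕₂ H₁ defined by R(x, h) = (T₀x + Ah, T₁h). Let μ, ν ∈ ℂ, let k ∈ H₁ satisfy T₁ k = μ k, and let e ∈ H₀ satisfy T₀* e = conj(ν)·e, where T₀* is the Hilbert-space adjoint. Denote by P₀ : H₀ ⊕₂ H₁ → H₀ the projection onto the first coordinate, and by ⟨e, u⟩ the inner product, linear in u. Then for every polynomial p with complex coefficients: if μ ≠ ν, then ⟨e, P₀(p(R)(0, k))⟩ = ((p(μ) − p(ν))/(μ − ν))·⟨e, A k⟩, and if μ = ν, then ⟨e, P₀(p(R)(0, k))⟩ = p′(μ)·⟨e, A k⟩, where p′ is the derivative of p. -/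

import Mathlib

noncomputable section

/-- The computation (4.2): for the block operator `R(x,h) = (T₀x + Ah, T₁h)`, an eigenvector
`k` of `T₁` with eigenvalue `μ`, and a vector `e` with `T₀* e = conj(ν)·e`, one has, for every
polynomial `p`, `⟨e, P₀(p(R)(0,k))⟩ = ((p(μ)−p(ν))/(μ−ν))·⟨e, Ak⟩` when `μ ≠ ν`, and
`⟨e, P₀(p(R)(0,k))⟩ = p′(μ)·⟨e, Ak⟩` when `μ = ν`. -/
theorem inner_aeval_block_eigenvector
    {H₀ H₁ : Type}
    [NormedAddCommGroup H₀] [InnerProductSpace ℂ H₀] [CompleteSpace H₀]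
    [NormedAddCommGroup H₁] [InnerProductSpace ℂ H₁] [CompleteSpace H₁]
    (T₀ : H₀ →L[ℂ] H₀) (T₁ : H₁ →L[ℂ] H₁) (A : H₁ →L[ℂ] H₀)
    (R : WithLp 2 (H₀ × H₁) →L[ℂ] WithLp 2 (H₀ × H₁))
    (hR : ∀ (x : H₀) (h : H₁),
      R ((WithLp.equiv 2 (H₀ × H₁)).symm (x, h))
        = (WithLp.equiv 2 (H₀ × H₁)).symm (T₀ x + A h, T₁ h))
    (μ ν : ℂ) (k : H₁) (hk : T₁ k = μ • k)
    (e : H₀) (he : ContinuousLinearMap.adjoint T₀ e = (starRingEnd ℂ) ν • e) :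
    ∀ p : Polynomial ℂ,
      (μ ≠ ν →
        (inner ℂ e
          (WithLp.equiv 2 (H₀ × H₁)
            (Polynomial.aeval R p ((WithLp.equiv 2 (H₀ × H₁)).symm (0, k)))).1 : ℂ)
          = ((p.eval μ - p.eval ν) / (μ - ν)) * (inner ℂ e (A k) : ℂ)) ∧
      (μ = ν →
        (inner ℂ e
          (WithLp.equiv 2 (H₀ × H₁)
            (Polynomial.aeval R p ((WithLp.equiv 2 (H₀ × H₁)).symm (0, k)))).1 : ℂ)
          = (Polynomial.derivative p).eval μ * (inner ℂ e (A k) : ℂ)) := by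
  -- the divided difference functional
  set D : Polynomial ℂ → ℂ := fun q =>
    if μ = ν then (Polynomial.derivative q).eval μ
    else (q.eval μ - q.eval ν) / (μ - ν) with hD
  have hDC : ∀ a : ℂ, D (Polynomial.C a) = 0 := by
    intro a; simp [hD]
  have hDadd : ∀ q r : Polynomial ℂ, D (q + r) = D q + D r := by
    intro q r
    by_cases h : μ = ν <;> simp [hD, h] <;> ring
  have hDX : ∀ q : Polynomial ℂ, D (Polynomial.X * q) = ν * D q + q.eval μ := by
    intro q
    by_cases h : μ = ν
    · simp [hD, h]; ring
    · have h' : μ - ν ≠ 0 := sub_ne_zero.mpr h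
      simp only [hD, if_neg h, Polynomial.eval_mul, Polynomial.eval_X]
      field_simp
      ring
  have hinner : ∀ x : H₀, (inner ℂ e (T₀ x) : ℂ) = ν * inner ℂ e x := by
    intro x
    rw [← ContinuousLinearMap.adjoint_inner_left, he, inner_smul_left]
    simp
  set E := WithLp.equiv 2 (H₀ × H₁) with hE
  set u : Polynomial ℂ → H₀ × H₁ := fun q =>
    E (Polynomial.aeval R q (E.symm (0, k))) with hu
  have key : ∀ q : Polynomial ℂ,
      (inner ℂ e (u q).1 : ℂ) = D q * inner ℂ e (A k) ∧ (u q).2 = q.eval μ • k := by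
    intro q
    induction q using Polynomial.induction_on with
    | C a =>
        have hCa : u (Polynomial.C a) = (0, a • k) := by
          show E (Polynomial.aeval R (Polynomial.C a) (E.symm (0, k))) = (0, a • k)
          rw [Polynomial.aeval_C, Algebra.algebraMap_eq_smul_one,
            ContinuousLinearMap.smul_apply, ContinuousLinearMap.one_apply]
          show a • ((0 : H₀), k) = ((0 : H₀), a • k)
          rw [Prod.smul_mk, smul_zero]
        rw [hCa]
        constructor
        · simp [hDC]
        · simp
    | add q r hq hr =>
        have hadd : u (q + r) = u q + u r := by
          show E (Polynomial.aeval R (q + r) (E.symm (0, k))) = u q + u r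
          rw [map_add, ContinuousLinearMap.add_apply]
          rfl
        rw [hadd]
        constructor
        · rw [show (u q + u r).1 = (u q).1 + (u r).1 from rfl, inner_add_right,
            hq.1, hr.1, hDadd]
          ring
        · rw [show (u q + u r).2 = (u q).2 + (u r).2 from rfl, hq.2, hr.2,
            Polynomial.eval_add, add_smul]
    | monomial n a ih =>
        set q := Polynomial.C a * Polynomial.X ^ n with hq
        have hrw : Polynomial.C a * Polynomial.X ^ (n + 1) = Polynomial.X * q := by
          rw [hq]; ring
        have hstep : u (Polynomial.C a * Polynomial.X ^ (n + 1))
            = (T₀ (u q).1 + A (u q).2, T₁ (u q).2) := by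
          show E (Polynomial.aeval R (Polynomial.C a * Polynomial.X ^ (n + 1)) (E.symm (0, k)))
            = (T₀ (u q).1 + A (u q).2, T₁ (u q).2)
          rw [hrw, map_mul, Polynomial.aeval_X, ContinuousLinearMap.mul_apply]
          have h2 : Polynomial.aeval R q (E.symm (0, k)) = E.symm ((u q).1, (u q).2) :=
            (E.symm_apply_apply _).symm
          rw [h2, hR, hE]
          exact (WithLp.equiv 2 (H₀ × H₁)).apply_symm_apply _
        rw [hstep]
        constructor
        · rw [show ((T₀ (u q).1 + A (u q).2, T₁ (u q).2) : H₀ × H₁).1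
              = T₀ (u q).1 + A (u q).2 from rfl]
          rw [inner_add_right, hinner, ih.1, ih.2, map_smul, inner_smul_right, hrw, hDX]
          ring
        · rw [show ((T₀ (u q).1 + A (u q).2, T₁ (u q).2) : H₀ × H₁).2 = T₁ (u q).2 from rfl]
          rw [ih.2, map_smul, hk, smul_smul]
          congr 1
          simp [hq]
          ring
  intro p
  constructor
  · intro h
    have := (key p).1
    simp only [hD, if_neg h] at this
    exact this
  · intro h
    have := (key p).1
    simp only [hD, if_pos h] at this
    exact this

end
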